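/- Let g ≥ 1 and let 𝐬 : ℝ^g → ℝ^g be the Viète map 𝐬(t) = (e₁(t), …, e_g(t)). Then 𝐬 is differentiable, and for every t ∈ ℝ^g the absolute value of the determinant of its Jacobian matrix at t equals ∏_{1≤j<k≤g} |t_k − t_j|. -/

import Mathlib

/-- The elementary symmetric polynomial of degree `k` in `g` variables. -/
def esymm (g k : ℕ) (t : Fin g → ℝ) : ℝ :=
  ∑ s ∈ Finset.univ.powersetCard k, ∏ j ∈ s, t j

/-- The Viète map `𝐬(t) = (e₁(t), …, e_g(t))`. -/
def viete (g : ℕ) (t : Fin g → ℝ) : Fin g → ℝ := fun i => esymm g ((i : ℕ) + 1) t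

open Finset

namespace VieteAux

variable {g : ℕ} {R : Type*} [CommRing R]

/-- The Jacobian matrix of the Viète map, generically. -/
def jac (g : ℕ) (t : Fin g → R) : Matrix (Fin g) (Fin g) R :=
  Matrix.of fun i j =>
    ∑ s ∈ Finset.univ.powersetCard ((i : ℕ) + 1),
      if j ∈ s then ∏ m ∈ s.erase j, t m else 0

/-- The Vandermonde product. -/
def vmd (g : ℕ) (t : Fin g → R) : R := ∏ j : Fin g, ∏ k ∈ Finset.Ioi j, (t k - t j)

lemma jac_apply (t : Fin g → R) (i j : Fin g) :
    jac g t i j = ∑ u ∈ (Finset.univ.erase j).powersetCard (i : ℕ), ∏ m ∈ u, t m := by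
  classical
  rw [jac, Matrix.of_apply, ← Finset.sum_filter]
  refine Finset.sum_nbij' (fun s => s.erase j) (fun u => insert j u) ?_ ?_ ?_ ?_ ?_
  · intro s hs
    simp only [Finset.mem_filter, Finset.mem_powersetCard] at hs ⊢
    obtain ⟨⟨hsub, hcard⟩, hj⟩ := hs
    refine ⟨?_, ?_⟩
    · intro x hx
      simp only [Finset.mem_erase] at hx ⊢
      exact ⟨hx.1, Finset.mem_univ x⟩
    · rw [Finset.card_erase_of_mem hj, hcard]
      omega
  · intro u hu
    simp only [Finset.mem_powersetCard] at hu
    obtain ⟨hsub, hcard⟩ := hu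
    have hj : j ∉ u := fun h => by simpa using (hsub h)
    refine Finset.mem_filter.mpr ⟨Finset.mem_powersetCard.mpr ⟨Finset.subset_univ _, ?_⟩,
      Finset.mem_insert_self _ _⟩
    rw [Finset.card_insert_of_notMem hj, hcard]
  · intro s hs
    simp only [Finset.mem_filter] at hs
    exact Finset.insert_erase hs.2
  · intro u hu
    simp only [Finset.mem_powersetCard] at hu
    have hj : j ∉ u := fun h => by simpa using (hu.1 h)
    exact Finset.erase_insert hj
  · intro s hs; rfl

lemma vieta_eval [Nontrivial R] (hg : 1 ≤ g) (t : Fin g → R) (j : Fin g) (x : R) :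
    ∑ k : Fin g, (-1 : R) ^ (k : ℕ) *
        (∑ u ∈ (Finset.univ.erase j).powersetCard (k : ℕ), ∏ m ∈ u, t m) *
        x ^ (g - 1 - (k : ℕ))
      = ∏ i ∈ Finset.univ.erase j, (x - t i) := by
  classical
  set s : Finset (Fin g) := Finset.univ.erase j with hs
  have hcard : s.card = g - 1 := by
    rw [hs, Finset.card_erase_of_mem (Finset.mem_univ j), Finset.card_univ, Fintype.card_fin]
  set P : Polynomial R := ∏ i ∈ s, (Polynomial.X - Polynomial.C (t i)) with hPdef
  have hP : P = (Multiset.map (fun r => Polynomial.X - Polynomial.C r) (s.val.map t)).prod := by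
    rw [hPdef, Finset.prod, Multiset.map_map]; rfl
  have hdeg : P.natDegree < g := by
    have hd : P.natDegree = ∑ i ∈ s, (Polynomial.X - Polynomial.C (t i)).natDegree :=
      Polynomial.natDegree_prod_of_monic _ _ fun i _ => Polynomial.monic_X_sub_C _
    rw [hd]
    simp only [Polynomial.natDegree_X_sub_C, Finset.sum_const, smul_eq_mul, mul_one, hcard]
    omega
  have hcoeff : ∀ k : ℕ, k < g →
      P.coeff (g - 1 - k) = (-1 : R) ^ k *
        ∑ u ∈ s.powersetCard k, ∏ m ∈ u, t m := by
    intro k hk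
    have hk' : k ≤ g - 1 := Nat.le_sub_one_of_lt hk
    have hle : g - 1 - k ≤ Multiset.card (s.val.map t) := by
      rw [Multiset.card_map]
      show g - 1 - k ≤ s.card
      omega
    rw [hP, Multiset.prod_X_sub_C_coeff _ hle]
    have hcards : Multiset.card (s.val.map t) = g - 1 := by
      rw [Multiset.card_map]; exact hcard
    rw [hcards]
    have h1 : g - 1 - (g - 1 - k) = k := by omega
    rw [h1, Finset.esymm_map_val]
  have heval : P.eval x = ∑ k ∈ Finset.range g, P.coeff k * x ^ k :=
    Polynomial.eval_eq_sum_range' hdeg x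
  have hrefl : ∑ k ∈ Finset.range g, P.coeff k * x ^ k
      = ∑ k ∈ Finset.range g, P.coeff (g - 1 - k) * x ^ (g - 1 - k) :=
    (Finset.sum_range_reflect (fun k => P.coeff k * x ^ k) g).symm
  calc ∑ k : Fin g, (-1 : R) ^ (k : ℕ) *
        (∑ u ∈ s.powersetCard (k : ℕ), ∏ m ∈ u, t m) * x ^ (g - 1 - (k : ℕ))
      = ∑ k ∈ Finset.range g, (-1 : R) ^ k *
        (∑ u ∈ s.powersetCard k, ∏ m ∈ u, t m) * x ^ (g - 1 - k) := by
        rw [← Fin.sum_univ_eq_sum_range]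
    _ = ∑ k ∈ Finset.range g, P.coeff (g - 1 - k) * x ^ (g - 1 - k) := by
        refine Finset.sum_congr rfl fun k hk => ?_
        rw [hcoeff k (Finset.mem_range.mp hk)]
    _ = P.eval x := by rw [heval, hrefl]
    _ = ∏ i ∈ s, (x - t i) := by
        rw [hPdef, Polynomial.eval_prod]
        simp

/-- The (sign-twisted, reflected) Vandermonde matrix. -/
def wmat (g : ℕ) (t : Fin g → R) : Matrix (Fin g) (Fin g) R :=
  Matrix.of fun m k => (-1 : R) ^ (k : ℕ) * t m ^ (g - 1 - (k : ℕ))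

lemma wmat_mul_jac [Nontrivial R] (hg : 1 ≤ g) (t : Fin g → R) :
    wmat g t * jac g t
      = Matrix.diagonal fun j => ∏ i ∈ Finset.univ.erase j, (t j - t i) := by
  classical
  ext m j
  rw [Matrix.mul_apply]
  have : ∀ k : Fin g, wmat g t m k * jac g t k j
      = (-1 : R) ^ (k : ℕ) *
        (∑ u ∈ (Finset.univ.erase j).powersetCard (k : ℕ), ∏ m' ∈ u, t m') *
        t m ^ (g - 1 - (k : ℕ)) := by
    intro k
    rw [jac_apply, wmat, Matrix.of_apply]
    ring
  rw [Finset.sum_congr rfl fun k _ => this k, vieta_eval hg t j (t m)]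
  by_cases hmj : m = j
  · subst hmj
    rw [Matrix.diagonal_apply_eq]
  · rw [Matrix.diagonal_apply_ne _ hmj]
    exact Finset.prod_eq_zero (Finset.mem_erase.mpr ⟨hmj, Finset.mem_univ m⟩) (sub_self _)

lemma det_wmat (t : Fin g → R) :
    ∃ ε : ℤ, (ε = 1 ∨ ε = -1) ∧ (wmat g t).det = (ε : R) * vmd g t := by
  classical
  have h1 : wmat g t = Matrix.of
      (fun (m k : Fin g) => (-1 : R) ^ (k : ℕ) *
        ((Matrix.vandermonde t).submatrix id Fin.revPerm) m k) := by
    ext m k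
    have hv : ((Fin.revPerm k : Fin g) : ℕ) = g - ((k : ℕ) + 1) := by
      simp [Fin.revPerm]
    simp only [wmat, Matrix.of_apply, Matrix.submatrix_apply, id_eq,
      Matrix.vandermonde_apply, hv]
    congr 2
    omega
  rw [h1, Matrix.det_mul_row, Matrix.det_permute', Matrix.det_vandermonde]
  have hprod : (∏ k : Fin g, (-1 : R) ^ (k : ℕ)) = (-1 : R) ^ (∑ k : Fin g, (k : ℕ)) :=
    Finset.prod_pow_eq_pow_sum _ _ _
  refine ⟨(-1) ^ (∑ k : Fin g, (k : ℕ))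
      * ((Equiv.Perm.sign (Fin.revPerm : Equiv.Perm (Fin g)) : ℤˣ) : ℤ), ?_, ?_⟩
  · rcases Int.units_eq_one_or (Equiv.Perm.sign (Fin.revPerm : Equiv.Perm (Fin g))) with h | h <;>
      rcases neg_one_pow_eq_or ℤ (∑ k : Fin g, (k : ℕ)) with h' | h' <;>
      simp [h, h']
  · rw [hprod, vmd]
    push_cast
    ring

lemma det_diag (t : Fin g → R) :
    ∃ ε : ℤ, (ε = 1 ∨ ε = -1) ∧
      (Matrix.diagonal fun j => ∏ i ∈ Finset.univ.erase j, (t j - t i)).det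
        = (ε : R) * (vmd g t * vmd g t) := by
  refine ⟨(-1 : ℤ) ^ (∑ i : Fin g, (Finset.Ioi i).card), neg_one_pow_eq_or ℤ _, ?_⟩
  have key := Finset.prod_prod_Ioi_mul_eq_prod_prod_off_diag (fun j i => t i - t j)
  simp only [Finset.compl_singleton] at key
  have key2 : (∏ i : Fin g, ∏ j ∈ Finset.Ioi i, (t i - t j) * (t j - t i))
      = ∏ j : Fin g, ∏ i ∈ Finset.univ.erase j, (t j - t i) := by
    rw [key]
  rw [Matrix.det_diagonal]
  refine Eq.trans (Eq.symm key2) ?_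
  calc (∏ i : Fin g, ∏ j ∈ Finset.Ioi i, (t i - t j) * (t j - t i))
      = ∏ i : Fin g, ∏ j ∈ Finset.Ioi i, (-1 : R) * ((t j - t i) * (t j - t i)) := by
        refine Finset.prod_congr rfl fun i _ => Finset.prod_congr rfl fun j _ => ?_
        ring
    _ = (∏ i : Fin g, ∏ j ∈ Finset.Ioi i, (-1 : R)) * (vmd g t * vmd g t) := by
        simp_rw [Finset.prod_mul_distrib, vmd]
    _ = (((-1 : ℤ) ^ (∑ i : Fin g, (Finset.Ioi i).card) : ℤ) : R)
          * (vmd g t * vmd g t) := by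
        congr 1
        simp only [Finset.prod_const]
        rw [Finset.prod_pow_eq_pow_sum]
        push_cast
        ring

lemma det_jac_X (hg : 1 ≤ g) :
    ∃ ε : ℤ, (ε = 1 ∨ ε = -1) ∧
      (jac g (fun i => (MvPolynomial.X i : MvPolynomial (Fin g) ℝ))).det
        = (ε : MvPolynomial (Fin g) ℝ)
            * vmd g (fun i => (MvPolynomial.X i : MvPolynomial (Fin g) ℝ)) := by
  classical
  set X : Fin g → MvPolynomial (Fin g) ℝ := fun i => MvPolynomial.X i with hX
  obtain ⟨ε₁, hε₁, h₁⟩ := det_wmat (g := g) X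
  obtain ⟨ε₂, hε₂, h₂⟩ := det_diag (g := g) X
  have hmul := congrArg Matrix.det (wmat_mul_jac hg X)
  rw [Matrix.det_mul, h₁, h₂] at hmul
  have hV : vmd g X ≠ 0 := by
    rw [vmd]
    refine Finset.prod_ne_zero_iff.mpr fun j _ => Finset.prod_ne_zero_iff.mpr fun k hk => ?_
    have hkj : k ≠ j := ne_of_gt (Finset.mem_Ioi.mp hk)
    rw [hX]
    exact sub_ne_zero.mpr fun h => hkj (MvPolynomial.X_injective h)
  refine ⟨ε₁ * ε₂, ?_, ?_⟩
  · rcases hε₁ with h | h <;> rcases hε₂ with h' | h' <;> simp [h, h']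
  · have hε₁sq : ((ε₁ : ℤ) : MvPolynomial (Fin g) ℝ) * (ε₁ : MvPolynomial (Fin g) ℝ) = 1 := by
      rcases hε₁ with h | h <;> simp [h]
    apply mul_left_cancel₀ hV
    push_cast
    linear_combination (ε₁ : MvPolynomial (Fin g) ℝ) * hmul
      - vmd g X * (jac g X).det * hε₁sq

lemma det_jac_real (hg : 1 ≤ g) :
    ∃ ε : ℤ, (ε = 1 ∨ ε = -1) ∧
      ∀ t : Fin g → ℝ, (jac g t).det = (ε : ℝ) * vmd g t := by
  classical
  obtain ⟨ε, hε, h⟩ := det_jac_X (g := g) hg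
  refine ⟨ε, hε, fun t => ?_⟩
  have := congrArg (MvPolynomial.eval t) h
  rw [RingHom.map_det, RingHom.mapMatrix_apply] at this
  have hmap : (jac g (fun i => (MvPolynomial.X i : MvPolynomial (Fin g) ℝ))).map
      (MvPolynomial.eval t) = jac g t := by
    ext i j
    simp [jac, Matrix.map_apply, apply_ite (MvPolynomial.eval t)]
  have hvmd : MvPolynomial.eval t
      (vmd g (fun i => (MvPolynomial.X i : MvPolynomial (Fin g) ℝ))) = vmd g t := by
    simp [vmd]
  rw [hmap, map_mul, hvmd, map_intCast] at this
  exact this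

/-- The derivative of the Viète map, componentwise, as a continuous linear map. -/
noncomputable def vieteDeriv (g : ℕ) (t : Fin g → ℝ) (i : Fin g) : (Fin g → ℝ) →L[ℝ] ℝ :=
  ∑ s ∈ Finset.univ.powersetCard ((i : ℕ) + 1), ∑ j ∈ s,
    (∏ m ∈ s.erase j, t m) • ContinuousLinearMap.proj j

lemma hasFDerivAt_viete (g : ℕ) (t : Fin g → ℝ) :
    HasFDerivAt (viete g)
      ((ContinuousLinearMap.pi (vieteDeriv g t)) : (Fin g → ℝ) →L[ℝ] (Fin g → ℝ)) t := by
  show HasFDerivAt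
    (fun (x : Fin g → ℝ) (i : Fin g) =>
      ∑ s ∈ Finset.univ.powersetCard ((i : ℕ) + 1), ∏ j ∈ s, x j)
    (ContinuousLinearMap.pi (vieteDeriv g t)) t
  refine hasFDerivAt_pi.mpr fun i => ?_
  exact HasFDerivAt.fun_sum fun s _ => HasFDerivAt.finset_prod fun j _ => hasFDerivAt_apply j t

lemma toMatrix'_vieteDeriv (g : ℕ) (t : Fin g → ℝ) :
    LinearMap.toMatrix'
      (((ContinuousLinearMap.pi (vieteDeriv g t)) : (Fin g → ℝ) →L[ℝ] (Fin g → ℝ))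
        : (Fin g → ℝ) →ₗ[ℝ] (Fin g → ℝ)) = jac g t := by
  classical
  ext i j
  rw [LinearMap.toMatrix'_apply]
  simp [vieteDeriv, jac, ContinuousLinearMap.proj_apply, Finset.sum_apply, Pi.single_apply,
    mul_ite, mul_one, mul_zero]

end VieteAux

open VieteAux in
/-- The Viète map is differentiable and the absolute value of its Jacobian determinant
at `t` equals `∏_{j<k} |t_k − t_j|`. -/
theorem viete_differentiable_and_jacobian (g : ℕ) (hg : 1 ≤ g) :
    Differentiable ℝ (viete g) ∧
    ∀ t : Fin g → ℝ,
      |LinearMap.det ((fderiv ℝ (viete g) t : (Fin g → ℝ) →L[ℝ] (Fin g → ℝ))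
          : (Fin g → ℝ) →ₗ[ℝ] (Fin g → ℝ))|
        = ∏ j : Fin g, ∏ k ∈ Finset.Ioi j, |t k - t j| := by
  classical
  constructor
  · exact fun t => (hasFDerivAt_viete g t).differentiableAt
  · intro t
    rw [(hasFDerivAt_viete g t).fderiv]
    obtain ⟨ε, hε, h⟩ := det_jac_real (g := g) hg
    rw [← LinearMap.det_toMatrix', toMatrix'_vieteDeriv, h t, abs_mul]
    have hε' : |(ε : ℝ)| = 1 := by rcases hε with h' | h' <;> simp [h']
    rw [hε', one_mul, vmd, Finset.abs_prod]
    exact Finset.prod_congr rfl fun j _ => Finset.abs_prod _ _
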